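/- Let m, n ≥ 0, let λ ∈ Λ_{n+1} with λ ⊂ m^{n+1}, let μ ∈ Λ_n with μ ⊂ m^n, and assume μ ⪯ λ (with μ regarded as an element of Λ_{n+1}). Then the set of ν ∈ Λ_m with ν ⊂ (n^m − μ′), ν ⊂ ((n+1)^m − λ′) such that (n^m − μ′)/ν and ((n+1)^m − λ′)/ν are vertical strips is nonempty, and the minimum over all such ν of |(n^m − μ′)/ν| + |((n+1)^m − λ′)/ν| equals m − d, where d = #{1 ≤ j ≤ m : λ′_j = μ′_j + 1}. -/
import Mathlib


open Finset

/-- `l` is a partition with at most `N` parts: `l 1 ≥ l 2 ≥ ⋯ ≥ l N (≥ 0)`. -/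
def IsPartition {N : ℕ} (l : Fin N → ℕ) : Prop :=
  ∀ i j : Fin N, i ≤ j → l j ≤ l i

/-- Containment of diagrams: `μ ⊂ l`. -/
def SubDiag {N : ℕ} (μ l : Fin N → ℕ) : Prop := ∀ j, μ j ≤ l j

/-- The weight `|l| = l 1 + ⋯ + l N`. -/
def wt {N : ℕ} (l : Fin N → ℕ) : ℕ := ∑ j, l j

/-- The skew diagram `l/μ` is a vertical strip: `μ j ≤ l j ≤ μ j + 1` for all `j`. -/
def VStrip {N : ℕ} (l μ : Fin N → ℕ) : Prop :=
  ∀ j, μ j ≤ l j ∧ l j ≤ μ j + 1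

/-- The skew diagram `l/μ` is a horizontal strip:
`l 1 ≥ μ 1 ≥ l 2 ≥ μ 2 ≥ ⋯ ≥ l N ≥ μ N` (interlacing). -/
def HStrip {N : ℕ} (l μ : Fin N → ℕ) : Prop :=
  (∀ j, μ j ≤ l j) ∧ ∀ (j : ℕ) (h : j + 1 < N), l ⟨j + 1, h⟩ ≤ μ ⟨j, by omega⟩

/-- `|l/μ| = |l| - |μ|` (for `μ ⊂ l`). -/
def skewWt {N : ℕ} (l μ : Fin N → ℕ) : ℕ := ∑ j, (l j - μ j)

/-- The proximity relation `μ ∼_r l`: there is a partition `ν ⊂ l, ν ⊂ μ` such that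
`l/ν` and `μ/ν` are vertical strips with `|l/ν| + |μ/ν| ≤ r`. -/
def simRel {N : ℕ} (r : ℕ) (μ l : Fin N → ℕ) : Prop :=
  ∃ ν : Fin N → ℕ, IsPartition ν ∧ SubDiag ν l ∧ SubDiag ν μ ∧
    VStrip l ν ∧ VStrip μ ν ∧ skewWt l ν + skewWt μ ν ≤ r

/-- `μ ⪯ l`: there is a partition `ν` with `μ ⊂ ν ⊂ l` such that `l/ν` and `ν/μ`
are horizontal strips. -/
def preceq {N : ℕ} (μ l : Fin N → ℕ) : Prop :=
  ∃ ν : Fin N → ℕ, IsPartition ν ∧ SubDiag μ ν ∧ SubDiag ν l ∧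
    HStrip l ν ∧ HStrip ν μ

/-- The conjugate partition `l′ ∈ Λ_m` (for `l ∈ Λ_N` with `l 1 ≤ m`):
`l′ i = #{j : l j ≥ i}` (here `i : Fin m` is 0-based, so `i+1`-th row). -/
def conjP {N : ℕ} (m : ℕ) (l : Fin N → ℕ) : Fin m → ℕ :=
  fun i => (Finset.univ.filter (fun j : Fin N => (i : ℕ) + 1 ≤ l j)).card

/-- The rectangular partition `m^N ∈ Λ_N`. -/
def rectP (m N : ℕ) : Fin N → ℕ := fun _ => m

/-- The complement `m^N − l` of `l ⊂ m^N` in `Λ_N`: `(m^N − l) j = m − l (N+1−j)`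
(1-based), i.e. `m - l j.rev` (0-based). -/
def complP {N : ℕ} (m : ℕ) (l : Fin N → ℕ) : Fin N → ℕ :=
  fun j => m - l j.rev

/-- The natural embedding `Λ_N ↪ Λ_{N+1}` by appending a zero part. -/
def extendP {N : ℕ} (l : Fin N → ℕ) : Fin (N + 1) → ℕ := Fin.snoc l 0

lemma conjP_mono' {N m : ℕ} {a b : Fin N → ℕ} (h : ∀ j, a j ≤ b j) (i : Fin m) :
    conjP m a i ≤ conjP m b i := by
  apply Finset.card_le_card
  intro j hj
  simp only [Finset.mem_filter, Finset.mem_univ, true_and] at *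
  exact hj.trans (h j)

lemma conjP_le' {N m : ℕ} (l : Fin N → ℕ) (i : Fin m) : conjP m l i ≤ N :=
  le_trans (Finset.card_filter_le _ _) (by simp)

lemma conjP_anti' {N m : ℕ} (l : Fin N → ℕ) {a b : Fin m} (h : a ≤ b) :
    conjP m l b ≤ conjP m l a := by
  apply Finset.card_le_card
  intro j hj
  simp only [Finset.mem_filter, Finset.mem_univ, true_and] at *
  have : (a : ℕ) ≤ (b : ℕ) := h
  omega

lemma conjP_extend' {n m : ℕ} (mu : Fin n → ℕ) : conjP m (extendP mu) = conjP m mu := by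
  funext i
  unfold conjP extendP
  rw [Finset.card_filter, Finset.card_filter, Fin.sum_univ_castSucc]
  simp [Fin.snoc_castSucc, Fin.snoc_last]

lemma conjP_shift' {N m : ℕ} (l v : Fin (N + 1) → ℕ)
    (h : ∀ (j : ℕ) (hj : j + 1 < N + 1), l ⟨j + 1, hj⟩ ≤ v ⟨j, by omega⟩) (i : Fin m) :
    conjP m l i ≤ conjP m v i + 1 := by
  unfold conjP
  rw [Finset.card_filter, Finset.card_filter, Fin.sum_univ_succ, Fin.sum_univ_castSucc]
  have hsum : ∑ j : Fin N, (if (i : ℕ) + 1 ≤ l j.succ then 1 else 0)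
      ≤ ∑ j : Fin N, (if (i : ℕ) + 1 ≤ v j.castSucc then 1 else 0) := by
    apply Finset.sum_le_sum
    intro j _
    have hj : l j.succ ≤ v j.castSucc := h j.val (by omega)
    split_ifs <;> omega
  have h0 : (if (i : ℕ) + 1 ≤ l 0 then 1 else 0) ≤ 1 := by split_ifs <;> omega
  set a := (if (i : ℕ) + 1 ≤ l 0 then 1 else 0)
  set b := (if (i : ℕ) + 1 ≤ v (Fin.last N) then 1 else 0)
  set S1 := ∑ j : Fin N, (if (i : ℕ) + 1 ≤ l j.succ then 1 else 0)
  set S2 := ∑ j : Fin N, (if (i : ℕ) + 1 ≤ v j.castSucc then 1 else 0)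
  omega

/-- For `λ ∈ Λ_{n+1}` with `λ ⊂ m^{n+1}` and `μ ∈ Λ_n` with `μ ⊂ m^n`
such that `μ ⪯ λ` (in `Λ_{n+1}`): the set of partitions `ν ∈ Λ_m` with
`ν ⊂ n^m − μ′`, `ν ⊂ (n+1)^m − λ′` such that `(n^m − μ′)/ν` and `((n+1)^m − λ′)/ν` are
vertical strips is nonempty, and the minimum of `|(n^m − μ′)/ν| + |((n+1)^m − λ′)/ν|`
over such `ν` equals `m − d`, where `d = #{1 ≤ j ≤ m : λ′_j = μ′_j + 1}`. -/
theorem statement12 (m n : ℕ) (lam : Fin (n + 1) → ℕ) (hlam : IsPartition lam)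
    (hlamb : SubDiag lam (rectP m (n + 1)))
    (mu : Fin n → ℕ) (hmu : IsPartition mu) (hmub : SubDiag mu (rectP m n))
    (hpre : preceq (extendP mu) lam) :
    ∃ nu : Fin m → ℕ, IsPartition nu ∧
      SubDiag nu (complP n (conjP m mu)) ∧
      SubDiag nu (complP (n + 1) (conjP m lam)) ∧
      VStrip (complP n (conjP m mu)) nu ∧
      VStrip (complP (n + 1) (conjP m lam)) nu ∧
      skewWt (complP n (conjP m mu)) nu + skewWt (complP (n + 1) (conjP m lam)) nu
        = m - (Finset.univ.filter
            (fun j : Fin m => conjP m lam j = conjP m mu j + 1)).card ∧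
      ∀ ρ : Fin m → ℕ, IsPartition ρ →
        SubDiag ρ (complP n (conjP m mu)) →
        SubDiag ρ (complP (n + 1) (conjP m lam)) →
        VStrip (complP n (conjP m mu)) ρ →
        VStrip (complP (n + 1) (conjP m lam)) ρ →
          m - (Finset.univ.filter
              (fun j : Fin m => conjP m lam j = conjP m mu j + 1)).card
            ≤ skewWt (complP n (conjP m mu)) ρ
              + skewWt (complP (n + 1) (conjP m lam)) ρ := by
  obtain ⟨v, hvP, hmv, hvl, hHlv, hHvm⟩ := hpre
  have hce : conjP m (extendP mu) = conjP m mu := conjP_extend' mu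
  have key1 : ∀ i : Fin m, conjP m mu i ≤ conjP m lam i := by
    intro i
    rw [← hce]
    exact conjP_mono' (fun j => le_trans (hmv j) (hvl j)) i
  have key2 : ∀ i : Fin m, conjP m lam i ≤ conjP m mu i + 2 := by
    intro i
    have h1 := conjP_shift' lam v hHlv.2 i
    have h2 := conjP_shift' v (extendP mu) hHvm.2 i
    rw [hce] at h2
    omega
  have key3 : ∀ i : Fin m, conjP m mu i ≤ n := fun i => conjP_le' mu i
  have key4 : ∀ i : Fin m, conjP m lam i ≤ n + 1 := fun i => conjP_le' lam i
  set A := complP n (conjP m mu) with hAdef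
  set B := complP (n + 1) (conjP m lam) with hBdef
  have hA : ∀ j : Fin m, A j = n - conjP m mu j.rev := fun _ => rfl
  have hB : ∀ j : Fin m, B j = (n + 1) - conjP m lam j.rev := fun _ => rfl
  have hAanti : ∀ i j : Fin m, i ≤ j → A j ≤ A i := by
    intro i j hij
    rw [hA, hA]
    exact Nat.sub_le_sub_left (conjP_anti' mu (Fin.rev_le_rev.mpr hij)) n
  have hBanti : ∀ i j : Fin m, i ≤ j → B j ≤ B i := by
    intro i j hij
    rw [hB, hB]
    exact Nat.sub_le_sub_left (conjP_anti' lam (Fin.rev_le_rev.mpr hij)) (n + 1)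
  have hAB : ∀ j : Fin m, A j ≤ B j + 1 ∧ B j ≤ A j + 1 := by
    intro j
    have k1 := key1 j.rev; have k2 := key2 j.rev
    have k3 := key3 j.rev; have k4 := key4 j.rev
    rw [hA, hB]
    omega
  refine ⟨fun j => min (A j) (B j), ?_, fun j => min_le_left _ _, fun j => min_le_right _ _,
    ?_, ?_, ?_, ?_⟩
  · intro i j hij
    exact le_min ((min_le_left _ _).trans (hAanti i j hij))
      ((min_le_right _ _).trans (hBanti i j hij))
  · intro j
    refine ⟨min_le_left _ _, ?_⟩
    show A j ≤ min (A j) (B j) + 1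
    have := (hAB j).1
    rcases min_cases (A j) (B j) with ⟨h, _⟩ | ⟨h, _⟩ <;> rw [h] <;> omega
  · intro j
    refine ⟨min_le_right _ _, ?_⟩
    show B j ≤ min (A j) (B j) + 1
    have := (hAB j).2
    rcases min_cases (A j) (B j) with ⟨h, _⟩ | ⟨h, _⟩ <;> rw [h] <;> omega
  · -- the equality
    have hterm : ∀ j : Fin m,
        (A j - min (A j) (B j)) + (B j - min (A j) (B j)) =
          (if conjP m lam j.rev = conjP m mu j.rev + 1 then 0 else 1) := by
      intro j
      have k1 := key1 j.rev; have k2 := key2 j.rev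
      have k3 := key3 j.rev; have k4 := key4 j.rev
      rw [hA, hB]
      rcases min_cases (n - conjP m mu j.rev) (n + 1 - conjP m lam j.rev) with
        ⟨h, h'⟩ | ⟨h, h'⟩ <;> rw [h] <;> split_ifs <;> omega
    unfold skewWt
    rw [← Finset.sum_add_distrib]
    rw [Finset.sum_congr rfl (fun j _ => hterm j)]
    have hrev : ∑ j : Fin m,
        (if conjP m lam j.rev = conjP m mu j.rev + 1 then 0 else 1) =
        ∑ j : Fin m, (if conjP m lam j = conjP m mu j + 1 then 0 else 1) :=
      Fintype.sum_equiv (Fin.revPerm) _ _ (fun j => rfl)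
    rw [hrev]
    have hnp : (Finset.univ.filter (fun j : Fin m => ¬ (conjP m lam j = conjP m mu j + 1))).card
        = ∑ j : Fin m, (if conjP m lam j = conjP m mu j + 1 then 0 else 1) := by
      rw [Finset.card_filter]
      exact Finset.sum_congr rfl (fun j _ => by split_ifs <;> simp_all)
    have hpm := Finset.card_filter_add_card_filter_not
      (s := (Finset.univ : Finset (Fin m)))
      (p := fun j : Fin m => conjP m lam j = conjP m mu j + 1)
    simp only [Finset.card_univ, Fintype.card_fin] at hpm
    rw [← hnp]
    set d1 := (Finset.univ.filter (fun j : Fin m => conjP m lam j = conjP m mu j + 1)).card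
    set d2 := (Finset.univ.filter (fun j : Fin m => ¬ (conjP m lam j = conjP m mu j + 1))).card
    omega
  · -- minimality; note the equality goal was the previous bullet, reuse its value
    intro ρ hρP hρA hρB hVA hVB
    have hterm : ∀ j : Fin m,
        (if conjP m lam j.rev = conjP m mu j.rev + 1 then (0 : ℕ) else 1) ≤
          (A j - ρ j) + (B j - ρ j) := by
      intro j
      have k1 := key1 j.rev; have k2 := key2 j.rev
      have k3 := key3 j.rev; have k4 := key4 j.rev
      have h1 := hρA j; have h2 := hρB j
      rw [hA, hB] at *
      split_ifs <;> omega
    have hsum : ∑ j : Fin m,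
        (if conjP m lam j.rev = conjP m mu j.rev + 1 then (0:ℕ) else 1) ≤
        skewWt A ρ + skewWt B ρ := by
      unfold skewWt
      rw [← Finset.sum_add_distrib]
      exact Finset.sum_le_sum (fun j _ => hterm j)
    refine le_trans (le_of_eq ?_) hsum
    have hrev : ∑ j : Fin m,
        (if conjP m lam j.rev = conjP m mu j.rev + 1 then (0:ℕ) else 1) =
        ∑ j : Fin m, (if conjP m lam j = conjP m mu j + 1 then 0 else 1) :=
      Fintype.sum_equiv (Fin.revPerm) _ _ (fun j => rfl)
    rw [hrev]
    have hnp : (Finset.univ.filter (fun j : Fin m => ¬ (conjP m lam j = conjP m mu j + 1))).card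
        = ∑ j : Fin m, (if conjP m lam j = conjP m mu j + 1 then 0 else 1) := by
      rw [Finset.card_filter]
      exact Finset.sum_congr rfl (fun j _ => by split_ifs <;> simp_all)
    have hpm := Finset.card_filter_add_card_filter_not
      (s := (Finset.univ : Finset (Fin m)))
      (p := fun j : Fin m => conjP m lam j = conjP m mu j + 1)
    simp only [Finset.card_univ, Fintype.card_fin] at hpm
    rw [← hnp]
    set d1 := (Finset.univ.filter (fun j : Fin m => conjP m lam j = conjP m mu j + 1)).card
    set d2 := (Finset.univ.filter (fun j : Fin m => ¬ (conjP m lam j = conjP m mu j + 1))).card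
    omega
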